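/- Let (X_k) be a d-type GW process and a ∈ (0,∞)^d with f_i(a) < ∞, and let (X̄_k) be the associated process. Then for every starting state k ∈ ℕ^d and every n ∈ ℕ^d, P_k(N̄ = n) = a^{n-k} f(a)^{-n} P_k(N = n), where a^{n-k} = ∏_i a_i^{n_i - k_i} and f(a)^n = ∏_i f_i(a)^{n_i}. -/

import Mathlib

open MeasureTheory Filter Topology
open scoped ENNReal NNReal

noncomputable section

namespace GW

variable {d : ℕ}

/-- `a^k = ∏_j a_j^{k_j}` for a multi-index `k`. -/
def npow (a : Fin d → ℝ) (k : Fin d → ℕ) : ℝ := ∏ j, a j ^ k j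

/-- Dirac mass at `0` on `ℕ^d`. -/
def delta : (Fin d → ℕ) → ℝ := fun k => if k = 0 then 1 else 0

/-- Convolution of two (sub)probability weight functions on `ℕ^d`. -/
def conv (p q : (Fin d → ℕ) → ℝ) : (Fin d → ℕ) → ℝ :=
  fun k => ∑' a : {a : Fin d → ℕ // a ≤ k}, p a.1 * q (k - a.1)

/-- `n`-fold convolution power `p^{*n}` (with `p^{*0} = δ_0`). -/
def convIter (p : (Fin d → ℕ) → ℝ) : ℕ → (Fin d → ℕ) → ℝ
  | 0 => delta
  | n + 1 => conv p (convIter p n)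

/-- One-step transition probabilities of the multitype GW process:
`P_1(x, ·) = p_1^{*x_1} * ⋯ * p_d^{*x_d}`. -/
def trans (p : Fin d → (Fin d → ℕ) → ℝ) (x : Fin d → ℕ) : (Fin d → ℕ) → ℝ :=
  (List.ofFn (fun i => convIter (p i) (x i))).foldr conv delta

/-- `p` is a probability mass function on `ℕ^d`. -/
structure IsPMF (p : (Fin d → ℕ) → ℝ) : Prop where
  nonneg : ∀ k, 0 ≤ p k
  hasSum : HasSum p 1

/-- `μ x` is the law on path space of the multitype GW process with offspring
distributions `p` started at `x`: a probability measure whose finite-dimensional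
distributions are products of one-step GW transition probabilities. -/
def IsGW (p : Fin d → (Fin d → ℕ) → ℝ)
    (μ : (Fin d → ℕ) → Measure (ℕ → Fin d → ℕ)) : Prop :=
  (∀ x, IsProbabilityMeasure (μ x)) ∧
  ∀ (x : Fin d → ℕ) (k : ℕ) (xs : ℕ → Fin d → ℕ), xs 0 = x →
    μ x {ω | ∀ j ≤ k, ω j = xs j}
      = ENNReal.ofReal (∏ j ∈ Finset.range k, trans p (xs j) (xs (j + 1)))

/-- Total progeny of type `i` along a path (valued in `ℝ≥0∞`). -/
def Ntot (ω : ℕ → Fin d → ℕ) (i : Fin d) : ℝ≥0∞ := ∑' k, (ω k i : ℝ≥0∞)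

lemma npow_zero (a : Fin d → ℝ) : npow a 0 = 1 := by simp [npow]

lemma npow_split (a : Fin d → ℝ) {x k : Fin d → ℕ} (h : x ≤ k) :
    npow a x * npow a (k - x) = npow a k := by
  rw [npow, npow, npow, ← Finset.prod_mul_distrib]
  refine Finset.prod_congr rfl fun j _ => ?_
  rw [← pow_add]
  congr 1
  have : (k - x) j = k j - x j := rfl
  rw [this, Nat.add_sub_cancel' (h j)]

lemma conv_delta_left (q : (Fin d → ℕ) → ℝ) : conv delta q = q := by
  funext k
  rw [conv, tsum_eq_single (⟨0, fun i => Nat.zero_le (k i)⟩ : {a : Fin d → ℕ // a ≤ k})]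
  · simp [delta]
  · rintro ⟨b, hb⟩ hne
    have : b ≠ 0 := by simpa [Subtype.ext_iff] using hne
    simp [delta, this]

lemma delta_eq_scale (a : Fin d → ℝ) :
    (delta : (Fin d → ℕ) → ℝ) = fun k => 1 * npow a k * delta k := by
  funext k
  by_cases h : k = 0 <;> simp [delta, h, npow_zero]

lemma conv_scale (a : Fin d → ℝ) (c c' : ℝ) (P Q : (Fin d → ℕ) → ℝ) :
    conv (fun k => c * npow a k * P k) (fun k => c' * npow a k * Q k)
      = fun k => (c * c') * npow a k * conv P Q k := by
  funext k
  rw [conv, conv, ← tsum_mul_left]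
  refine tsum_congr fun ⟨x, hx⟩ => ?_
  have h := npow_split a hx
  calc c * npow a x * P x * (c' * npow a (k - x) * Q (k - x))
      = (npow a x * npow a (k - x)) * (c * c' * (P x * Q (k - x))) := by ring
    _ = c * c' * npow a k * (P x * Q (k - x)) := by rw [h]; ring

lemma convIter_scale (a : Fin d → ℝ) (c : ℝ) (P : (Fin d → ℕ) → ℝ) (m : ℕ) :
    convIter (fun k => c * npow a k * P k) m
      = fun k => c ^ m * npow a k * convIter P m k := by
  induction m with
  | zero => simpa [convIter] using delta_eq_scale a
  | succ m ih =>
      show conv _ _ = _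
      rw [ih, conv_scale a c (c ^ m) P (convIter P m)]
      funext k
      show c * c ^ m * npow a k * conv P (convIter P m) k = _
      rw [← pow_succ']
      rfl

lemma foldr_scale (a : Fin d → ℝ) :
    ∀ (L : List (ℝ × ((Fin d → ℕ) → ℝ))),
      (L.map (fun cp => fun k => cp.1 * npow a k * cp.2 k)).foldr conv delta
        = fun k => (L.map Prod.fst).prod * npow a k * (L.map Prod.snd).foldr conv delta k
  | [] => by simpa using delta_eq_scale a
  | cp :: L => by
      simp only [List.map_cons, List.foldr_cons, List.prod_cons]
      rw [foldr_scale a L, conv_scale]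

lemma trans_scale (a : Fin d → ℝ) (c : Fin d → ℝ) (p : Fin d → (Fin d → ℕ) → ℝ)
    (x y : Fin d → ℕ) :
    trans (fun i k => c i * npow a k * p i k) x y
      = (∏ i, c i ^ x i) * npow a y * trans p x y := by
  have h1 : (List.ofFn (fun i => convIter (fun k => c i * npow a k * p i k) (x i)))
      = (List.ofFn (fun i => (c i ^ x i, convIter (p i) (x i)))).map
          (fun cp => fun k => cp.1 * npow a k * cp.2 k) := by
    rw [List.map_ofFn]
    refine congrArg List.ofFn (funext fun i => ?_)
    exact convIter_scale a (c i) (p i) (x i)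
  rw [trans, h1, foldr_scale]
  rw [List.map_ofFn, List.map_ofFn, List.prod_ofFn]
  rfl

lemma foldr_replicate_delta : ∀ n : ℕ,
    (List.replicate n (delta : (Fin d → ℕ) → ℝ)).foldr conv delta = delta
  | 0 => rfl
  | n + 1 => by
      rw [List.replicate_succ, List.foldr_cons, foldr_replicate_delta n, conv_delta_left]

lemma trans_zero (p : Fin d → (Fin d → ℕ) → ℝ) : trans p 0 = delta := by
  rw [trans]
  have : (List.ofFn (fun i : Fin d => convIter (p i) ((0 : Fin d → ℕ) i)))
      = List.replicate d (delta : (Fin d → ℕ) → ℝ) := by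
    simp [convIter, List.ofFn_const]
  rw [this, foldr_replicate_delta]

lemma delta_nonneg : ∀ k : Fin d → ℕ, 0 ≤ delta k := fun k => by
  by_cases h : k = 0 <;> simp [delta, h]

lemma conv_nonneg {p q : (Fin d → ℕ) → ℝ} (hp : ∀ k, 0 ≤ p k) (hq : ∀ k, 0 ≤ q k) :
    ∀ k, 0 ≤ conv p q k := fun k =>
  tsum_nonneg fun x => mul_nonneg (hp _) (hq _)

lemma convIter_nonneg {p : (Fin d → ℕ) → ℝ} (hp : ∀ k, 0 ≤ p k) (m : ℕ) :
    ∀ k, 0 ≤ convIter p m k := by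
  induction m with
  | zero => exact delta_nonneg
  | succ m ih => exact conv_nonneg hp ih

lemma foldr_nonneg : ∀ (L : List ((Fin d → ℕ) → ℝ)), (∀ q ∈ L, ∀ k, 0 ≤ q k) →
    ∀ k, 0 ≤ L.foldr conv delta k
  | [], _ => delta_nonneg
  | q :: L, h => conv_nonneg (h q (by simp)) (foldr_nonneg L fun r hr => h r (by simp [hr]))

lemma trans_nonneg {p : Fin d → (Fin d → ℕ) → ℝ} (hp : ∀ i k, 0 ≤ p i k) (x : Fin d → ℕ) :
    ∀ y, 0 ≤ trans p x y := by
  refine foldr_nonneg _ fun q hq => ?_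
  simp only [List.mem_ofFn] at hq
  obtain ⟨i, rfl⟩ := hq
  exact convIter_nonneg (hp i) (x i)

/-- cylinder set -/
def cyl (xs : ℕ → Fin d → ℕ) (k : ℕ) : Set (ℕ → Fin d → ℕ) := {ω | ∀ j ≤ k, ω j = xs j}

lemma cyl_measurable (xs : ℕ → Fin d → ℕ) (k : ℕ) : MeasurableSet (cyl xs k) := by
  have : cyl xs k = ⋂ j ∈ Set.Iic k, (fun ω : ℕ → Fin d → ℕ => ω j) ⁻¹' {xs j} := by
    ext ω; simp [cyl]
  rw [this]
  exact MeasurableSet.biInter (Set.to_countable _)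
    fun j _ => (measurable_pi_apply j) (measurableSet_singleton _)

lemma cyl_antitone (xs : ℕ → Fin d → ℕ) : Antitone (cyl xs) := by
  intro k l hkl ω hω j hj
  exact hω j (hj.trans hkl)

lemma singleton_eq_iInter_cyl (xs : ℕ → Fin d → ℕ) :
    ({xs} : Set (ℕ → Fin d → ℕ)) = ⋂ k, cyl xs k := by
  ext ω
  constructor
  · rintro rfl
    exact Set.mem_iInter.2 fun k j hj => rfl
  · intro h
    simp only [Set.mem_iInter] at h
    exact funext fun j => h j j le_rfl

/-- Measure of a singleton for a GW law: for a path absorbed at `0` from time `m` on. -/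
lemma measure_singleton (p : Fin d → (Fin d → ℕ) → ℝ)
    (μ : (Fin d → ℕ) → Measure (ℕ → Fin d → ℕ)) (hμ : IsGW p μ)
    (xs : ℕ → Fin d → ℕ) (m : ℕ) (hm : ∀ j, m ≤ j → xs j = 0) :
    μ (xs 0) {xs} = ENNReal.ofReal (∏ j ∈ Finset.range m, trans p (xs j) (xs (j + 1))) := by
  have hcyl : ∀ k, μ (xs 0) (cyl xs k)
      = ENNReal.ofReal (∏ j ∈ Finset.range k, trans p (xs j) (xs (j + 1))) :=
    fun k => hμ.2 (xs 0) k xs rfl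
  have hstab : ∀ k, m ≤ k → μ (xs 0) (cyl xs k) = μ (xs 0) (cyl xs m) := by
    intro k hk
    rw [hcyl, hcyl]
    congr 1
    refine (Finset.prod_subset (Finset.range_subset_range.2 hk) fun j hj hjm => ?_).symm
    simp only [Finset.mem_range, not_lt] at hjm
    have h1 : xs j = 0 := hm j hjm
    have h2 : xs (j + 1) = 0 := hm (j + 1) (hjm.trans (Nat.le_succ j))
    rw [h1, h2, trans_zero]
    simp [delta]
  rw [singleton_eq_iInter_cyl]
  rw [Directed.measure_iInter (fun k => (cyl_measurable xs k).nullMeasurableSet)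
      (directed_of_isDirected_le fun k l hkl => cyl_antitone xs hkl)
      ⟨0, by rw [hcyl]; exact ENNReal.ofReal_ne_top⟩]
  rw [← hcyl m]
  refine le_antisymm (iInf_le _ m) (le_iInf fun k => ?_)
  rcases le_total m k with h | h
  · rw [hstab k h]
  · exact (hstab m le_rfl ▸ measure_mono (cyl_antitone xs h) : μ (xs 0) (cyl xs m) ≤ _)

lemma eventually_zero {ω : ℕ → Fin d → ℕ} {n : Fin d → ℕ}
    (h : ∀ i, Ntot ω i = (n i : ℝ≥0∞)) : ∃ m, ∀ j, m ≤ j → ω j = 0 := by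
  have hfin : ∀ i : Fin d, {j : ℕ | ω j i ≠ 0}.Finite := by
    intro i
    have hne : (∑' k, (ω k i : ℝ≥0∞)) ≠ ⊤ := by
      have := h i; rw [Ntot] at this; rw [this]; exact ENNReal.natCast_ne_top _
    have := ENNReal.finite_const_le_of_tsum_ne_top hne (ε := 1) one_ne_zero
    refine this.subset fun j hj => ?_
    simpa [Nat.one_le_iff_ne_zero] using hj
  have hfin2 : {j : ℕ | ω j ≠ 0}.Finite := by
    refine (Set.Finite.biUnion (Set.finite_univ (α := Fin d))
      (fun i _ => hfin i)).subset fun j hj => ?_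
    simp only [Set.mem_setOf_eq] at hj
    have : ∃ i, ω j i ≠ 0 := by
      by_contra hc
      push_neg at hc
      exact hj (funext hc)
    obtain ⟨i, hi⟩ := this
    exact Set.mem_biUnion (Set.mem_univ i) hi
  obtain ⟨m, hm⟩ := hfin2.bddAbove
  refine ⟨m + 1, fun j hj => ?_⟩
  by_contra hc
  have : j ∈ {j | ω j ≠ 0} := hc
  have := hm this
  omega

lemma countable_event (n : Fin d → ℕ) :
    {ω : ℕ → Fin d → ℕ | ∀ i, Ntot ω i = (n i : ℝ≥0∞)}.Countable := by
  have hsub : {ω : ℕ → Fin d → ℕ | ∀ i, Ntot ω i = (n i : ℝ≥0∞)}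
      ⊆ ⋃ m : ℕ, Set.range (fun v : Fin m → Fin d → ℕ =>
          (fun j => if h : j < m then v ⟨j, h⟩ else 0 : ℕ → Fin d → ℕ)) := by
    intro ω hω
    obtain ⟨m, hm⟩ := eventually_zero hω
    refine Set.mem_iUnion.2 ⟨m, ⟨fun j => ω j.1, ?_⟩⟩
    funext j
    by_cases h : j < m
    · simp [h]
    · simp only [h, dif_neg, not_false_iff]
      exact (hm j (not_lt.1 h)).symm
  exact (Set.countable_iUnion fun m => Set.countable_range _).mono hsub

lemma start_point (p : Fin d → (Fin d → ℕ) → ℝ)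
    (μ : (Fin d → ℕ) → Measure (ℕ → Fin d → ℕ)) (hμ : IsGW p μ)
    (x : Fin d → ℕ) (ω : ℕ → Fin d → ℕ) (hx : ω 0 ≠ x) : μ x {ω} = 0 := by
  have h1 : μ x {ω' : ℕ → Fin d → ℕ | ω' 0 = x} = 1 := by
    have := hμ.2 x 0 (fun _ => x) rfl
    simpa [Nat.le_zero] using this
  have hmeas : MeasurableSet {ω' : ℕ → Fin d → ℕ | ω' 0 = x} := by
    have : {ω' : ℕ → Fin d → ℕ | ω' 0 = x}
        = (fun ω' : ℕ → Fin d → ℕ => ω' 0) ⁻¹' {x} := rfl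
    rw [this]
    exact (measurable_pi_apply 0) (measurableSet_singleton x)
  haveI := hμ.1 x
  have h2 : μ x {ω' : ℕ → Fin d → ℕ | ω' 0 = x}ᶜ = 0 := by
    rw [measure_compl hmeas (measure_ne_top _ _), h1, measure_univ, tsub_self]
  refine le_antisymm (le_trans (measure_mono ?_) h2.le) (by positivity)
  intro ω' hω'
  simp only [Set.mem_singleton_iff] at hω'
  subst hω'
  exact hx

lemma npow_pos {a : Fin d → ℝ} (ha : ∀ i, 0 < a i) (k : Fin d → ℕ) : 0 < npow a k :=
  Finset.prod_pos fun j _ => pow_pos (ha j) _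

lemma singleton_ratio (p : Fin d → (Fin d → ℕ) → ℝ)
    (hp : ∀ i, IsPMF (p i))
    (a : Fin d → ℝ) (ha : ∀ i, 0 < a i)
    (hfa : ∀ i, Summable fun k => p i k * npow a k)
    (fa : Fin d → ℝ) (hfadef : ∀ i, fa i = ∑' k, p i k * npow a k)
    (pbar : Fin d → (Fin d → ℕ) → ℝ)
    (hpbar : ∀ i k, pbar i k = npow a k * p i k / fa i)
    (μ μbar : (Fin d → ℕ) → Measure (ℕ → Fin d → ℕ))
    (hμ : IsGW p μ) (hμbar : IsGW pbar μbar)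
    (k0 n : Fin d → ℕ) (ω : ℕ → Fin d → ℕ) (hω : ∀ i, Ntot ω i = (n i : ℝ≥0∞)) :
    μbar k0 {ω} = ENNReal.ofReal
        ((∏ i, a i ^ ((n i : ℤ) - (k0 i : ℤ))) * ∏ i, fa i ^ (-(n i : ℤ))) *
      μ k0 {ω} := by
  have hfapos : ∀ i, 0 < fa i := by
    intro i
    have hex : ∃ k, p i k ≠ 0 := by
      by_contra hc
      push_neg at hc
      have h1 : (1 : ℝ) = ∑' k, p i k := ((hp i).hasSum.tsum_eq).symm
      simp [hc] at h1
    obtain ⟨k, hk⟩ := hex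
    rw [hfadef i]
    exact Summable.tsum_pos (hfa i)
      (fun k => mul_nonneg ((hp i).nonneg k) (npow_pos ha k).le) k
      (mul_pos (lt_of_le_of_ne ((hp i).nonneg k) (Ne.symm hk)) (npow_pos ha k))
  set c : ℝ := (∏ i, a i ^ ((n i : ℤ) - (k0 i : ℤ))) * ∏ i, fa i ^ (-(n i : ℤ)) with hc
  have hcpos : 0 < c :=
    mul_pos (Finset.prod_pos fun i _ => zpow_pos (ha i) _)
      (Finset.prod_pos fun i _ => zpow_pos (hfapos i) _)
  by_cases h0 : ω 0 = k0
  · -- main case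
    obtain ⟨m, hm⟩ := eventually_zero hω
    have h1 : μ k0 {ω} = ENNReal.ofReal
        (∏ j ∈ Finset.range m, trans p (ω j) (ω (j + 1))) := by
      rw [← h0]; exact measure_singleton p μ hμ ω m hm
    have h2 : μbar k0 {ω} = ENNReal.ofReal
        (∏ j ∈ Finset.range m, trans pbar (ω j) (ω (j + 1))) := by
      rw [← h0]; exact measure_singleton pbar μbar hμbar ω m hm
    -- rewrite pbar as a scaled family
    have hpb : pbar = fun i k => (fa i)⁻¹ * npow a k * p i k := by
      funext i k
      rw [hpbar i k]
      field_simp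
    have htrans : ∀ j, trans pbar (ω j) (ω (j + 1))
        = (∏ i, ((fa i)⁻¹) ^ (ω j i)) * npow a (ω (j + 1)) * trans p (ω j) (ω (j + 1)) := by
      intro j
      rw [hpb]
      exact trans_scale a (fun i => (fa i)⁻¹) p (ω j) (ω (j + 1))
    -- sums of coordinates
    have hS : ∀ i, ∑ j ∈ Finset.range m, ω j i = n i := by
      intro i
      have h3 : (∑' j, (ω j i : ℝ≥0∞)) = ∑ j ∈ Finset.range m, (ω j i : ℝ≥0∞) := by
        refine tsum_eq_sum fun j hj => ?_
        simp only [Finset.mem_range, not_lt] at hj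
        rw [hm j hj]
        simp
      have h4 := hω i
      rw [Ntot, h3] at h4
      have h5 : ((∑ j ∈ Finset.range m, ω j i : ℕ) : ℝ≥0∞) = ((n i : ℕ) : ℝ≥0∞) := by
        push_cast
        exact h4
      exact_mod_cast h5
    have hT : ∀ i, k0 i + ∑ j ∈ Finset.range m, ω (j + 1) i = n i := by
      intro i
      have h6 := Finset.sum_range_succ' (fun j => ω j i) m
      have h7 : ∑ j ∈ Finset.range (m + 1), ω j i = n i := by
        rw [Finset.sum_range_succ, hS i, hm m le_rfl]
        simp
      rw [h7] at h6
      rw [h0] at h6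
      omega
    -- compute the scalar factors
    have hA : ∏ j ∈ Finset.range m, ∏ i, ((fa i)⁻¹) ^ (ω j i)
        = ∏ i, fa i ^ (-(n i : ℤ)) := by
      rw [Finset.prod_comm]
      refine Finset.prod_congr rfl fun i _ => ?_
      rw [Finset.prod_pow_eq_pow_sum, hS i, zpow_neg, zpow_natCast, inv_pow]
    have hB : ∏ j ∈ Finset.range m, npow a (ω (j + 1))
        = ∏ i, a i ^ ((n i : ℤ) - (k0 i : ℤ)) := by
      simp only [npow]
      rw [Finset.prod_comm]
      refine Finset.prod_congr rfl fun i _ => ?_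
      rw [Finset.prod_pow_eq_pow_sum]
      have h8 : ((n i : ℤ) - (k0 i : ℤ)) = ((∑ j ∈ Finset.range m, ω (j + 1) i : ℕ) : ℤ) := by
        have := hT i
        omega
      rw [h8, zpow_natCast]
    have hprod : ∏ j ∈ Finset.range m, trans pbar (ω j) (ω (j + 1))
        = c * ∏ j ∈ Finset.range m, trans p (ω j) (ω (j + 1)) := by
      calc ∏ j ∈ Finset.range m, trans pbar (ω j) (ω (j + 1))
          = ∏ j ∈ Finset.range m,
              ((∏ i, ((fa i)⁻¹) ^ (ω j i)) * npow a (ω (j + 1))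
                * trans p (ω j) (ω (j + 1))) := Finset.prod_congr rfl fun j _ => htrans j
        _ = (∏ j ∈ Finset.range m, ∏ i, ((fa i)⁻¹) ^ (ω j i))
              * (∏ j ∈ Finset.range m, npow a (ω (j + 1)))
              * ∏ j ∈ Finset.range m, trans p (ω j) (ω (j + 1)) := by
            rw [← Finset.prod_mul_distrib, ← Finset.prod_mul_distrib]
        _ = c * ∏ j ∈ Finset.range m, trans p (ω j) (ω (j + 1)) := by
            rw [hA, hB, hc]; ring
    rw [h1, h2, hprod, ENNReal.ofReal_mul hcpos.le]
  · rw [start_point p μ hμ k0 ω h0, start_point pbar μbar hμbar k0 ω h0, mul_zero]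

/-- the total progeny of the associated process satisfies
`P_k(N̄ = n) = a^{n-k} f(a)^{-n} P_k(N = n)`. -/
theorem assoc_total_progeny {d : ℕ} (p : Fin d → (Fin d → ℕ) → ℝ)
    (hp : ∀ i, IsPMF (p i))
    (a : Fin d → ℝ) (ha : ∀ i, 0 < a i)
    (hfa : ∀ i, Summable fun k => p i k * npow a k)
    (fa : Fin d → ℝ) (hfadef : ∀ i, fa i = ∑' k, p i k * npow a k)
    (pbar : Fin d → (Fin d → ℕ) → ℝ)
    (hpbar : ∀ i k, pbar i k = npow a k * p i k / fa i)
    (μ μbar : (Fin d → ℕ) → Measure (ℕ → Fin d → ℕ))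
    (hμ : IsGW p μ) (hμbar : IsGW pbar μbar) :
    ∀ (k0 n : Fin d → ℕ),
      μbar k0 {ω | ∀ i, Ntot ω i = (n i : ℝ≥0∞)}
        = ENNReal.ofReal
            ((∏ i, a i ^ ((n i : ℤ) - (k0 i : ℤ))) * ∏ i, fa i ^ (-(n i : ℤ))) *
          μ k0 {ω | ∀ i, Ntot ω i = (n i : ℝ≥0∞)} := by
  intro k0 n
  set E : Set (ℕ → Fin d → ℕ) := {ω | ∀ i, Ntot ω i = (n i : ℝ≥0∞)} with hE
  have hEc : E.Countable := countable_event n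
  have hEeq : E = ⋃ ω ∈ E, {ω} := (Set.biUnion_of_singleton E).symm
  have hdisj : E.PairwiseDisjoint (fun ω : ℕ → Fin d → ℕ => ({ω} : Set (ℕ → Fin d → ℕ))) :=
    fun x _ y _ hxy => by simp [Function.onFun, Set.disjoint_singleton, hxy]
  have hms : ∀ ω ∈ E, MeasurableSet ({ω} : Set (ℕ → Fin d → ℕ)) :=
    fun ω _ => measurableSet_singleton ω
  have h1 : μbar k0 E = ∑' (ω : E), μbar k0 {ω.1} := by
    conv_lhs => rw [hEeq]
    exact measure_biUnion hEc hdisj hms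
  have h2 : μ k0 E = ∑' (ω : E), μ k0 {ω.1} := by
    conv_lhs => rw [hEeq]
    exact measure_biUnion hEc hdisj hms
  rw [h1, h2, ← ENNReal.tsum_mul_left]
  refine tsum_congr fun ω => ?_
  exact singleton_ratio p hp a ha hfa fa hfadef pbar hpbar μ μbar hμ hμbar k0 n ω.1 ω.2


end GW
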